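/- For every complex number x with |x| < 1, ∏_{m=1}^∞ (1 − x^m) = 1 + ∑_{n=1}^∞ (−1)^n x^{n(n+1)/2} / ∏_{j=1}^n (1 − x^j), where all products and the series converge (Euler's alternating q-series expansion of the infinite product). -/

import Mathlib

open Filter Finset Topology

noncomputable def eulerP (x : ℂ) (n : ℕ) : ℂ := ∏ j ∈ Finset.range n, (1 - x ^ (j + 1))

noncomputable def eulerC (x z : ℂ) : ℕ → ℂ
  | 0 => 1
  | n + 1 => -z * x ^ n * eulerC x z n

lemma eulerP_zero (x : ℂ) : eulerP x 0 = 1 := by simp [eulerP]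

lemma eulerP_succ (x : ℂ) (n : ℕ) : eulerP x (n + 1) = eulerP x n * (1 - x ^ (n + 1)) :=
  Finset.prod_range_succ _ _

lemma eulerP_ne_zero (x : ℂ) (hne : ∀ k : ℕ, (1 : ℂ) - x ^ (k + 1) ≠ 0) (n : ℕ) :
    eulerP x n ≠ 0 :=
  Finset.prod_ne_zero_iff.mpr fun j _ => hne j

lemma euler_pascal (x : ℂ) (hne : ∀ k : ℕ, (1 : ℂ) - x ^ (k + 1) ≠ 0) {n N : ℕ}
    (h : n < N) :
    eulerP x (N + 1) / (eulerP x (n + 1) * eulerP x (N + 1 - (n + 1))) =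
      eulerP x N / (eulerP x (n + 1) * eulerP x (N - (n + 1))) +
        x ^ (N - n) * (eulerP x N / (eulerP x n * eulerP x (N - n))) := by
  have hP := eulerP_ne_zero x hne
  obtain ⟨m, rfl⟩ : ∃ m, N = n + m + 1 := ⟨N - n - 1, by omega⟩
  have e1 : n + m + 1 + 1 - (n + 1) = m + 1 := by omega
  have e2 : n + m + 1 - (n + 1) = m := by omega
  have e3 : n + m + 1 - n = m + 1 := by omega
  rw [e1, e2, e3]
  have e4 : n + m + 1 + 1 = (n + m + 1) + 1 := rfl
  rw [e4, eulerP_succ x (n + m + 1), eulerP_succ x m, eulerP_succ x n]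
  have h1 := hP n
  have h2 := hP m
  have h3 := hP (n + m + 1)
  have h4 := hne n
  have h5 := hne m
  have h6 := hne (n + m + 1)
  field_simp
  ring

lemma eulerC_x (x : ℂ) (n : ℕ) : eulerC x x n = (-1) ^ n * x ^ (n * (n + 1) / 2) := by
  induction n with
  | zero => simp [eulerC]
  | succ n ih =>
    have h2 : (n + 1) * (n + 2) = n * (n + 1) + 2 * (n + 1) := by ring
    obtain ⟨k, hk⟩ := Nat.even_mul_succ_self n
    have h1 : n * (n + 1) = 2 * k := by omega
    have h : (n + 1) * (n + 2) / 2 = n * (n + 1) / 2 + (n + 1) := by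
      rw [h2, h1]; omega
    rw [eulerC, ih, h, pow_add, pow_succ]
    ring

section KEY
open Filter Finset Topology

lemma euler_key (x z : ℂ) (hne : ∀ k : ℕ, (1 : ℂ) - x ^ (k + 1) ≠ 0) (N : ℕ) :
    ∏ j ∈ Finset.range N, (1 - z * x ^ j) =
      ∑ n ∈ Finset.range (N + 1),
        eulerC x z n * (eulerP x N / (eulerP x n * eulerP x (N - n))) := by
  have hP := eulerP_ne_zero x hne
  have hG0 : ∀ M : ℕ, eulerP x M / (eulerP x 0 * eulerP x (M - 0)) = 1 := by
    intro M
    rw [eulerP_zero, one_mul, Nat.sub_zero, div_self (hP M)]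
  have hGtop : ∀ M : ℕ, eulerP x M / (eulerP x M * eulerP x (M - M)) = 1 := by
    intro M
    rw [Nat.sub_self, eulerP_zero, mul_one, div_self (hP M)]
  induction N with
  | zero => simp [eulerC, hG0 0, eulerP_zero]
  | succ N ih =>
    set f : ℕ → ℂ := fun n => eulerC x z n * (eulerP x N / (eulerP x n * eulerP x (N - n)))
      with hf
    set F : ℕ → ℂ :=
      fun n => eulerC x z n * (eulerP x (N + 1) / (eulerP x n * eulerP x (N + 1 - n))) with hF
    rw [Finset.prod_range_succ, ih]
    show (∑ n ∈ Finset.range (N + 1), f n) * (1 - z * x ^ N) = ∑ n ∈ Finset.range (N + 2), F n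
    have hpas : ∀ n ∈ Finset.range N,
        F (n + 1) = f (n + 1) + (-(z * x ^ N)) * f n := by
      intro n hn
      have hnN : n < N := Finset.mem_range.mp hn
      rw [hF, hf]
      simp only
      rw [euler_pascal x hne hnN]
      have hxx : eulerC x z (n + 1) * x ^ (N - n) = -(z * x ^ N) * eulerC x z n := by
        show -z * x ^ n * eulerC x z n * x ^ (N - n) = _
        have hpow : x ^ n * x ^ (N - n) = x ^ N := by
          rw [← pow_add]; congr 1; omega
        calc -z * x ^ n * eulerC x z n * x ^ (N - n)
            = -z * (x ^ n * x ^ (N - n)) * eulerC x z n := by ring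
          _ = -(z * x ^ N) * eulerC x z n := by rw [hpow]; ring
      calc eulerC x z (n + 1) *
            (eulerP x N / (eulerP x (n + 1) * eulerP x (N - (n + 1))) +
              x ^ (N - n) * (eulerP x N / (eulerP x n * eulerP x (N - n))))
          = eulerC x z (n + 1) * (eulerP x N / (eulerP x (n + 1) * eulerP x (N - (n + 1)))) +
              (eulerC x z (n + 1) * x ^ (N - n)) *
                (eulerP x N / (eulerP x n * eulerP x (N - n))) := by ring
        _ = _ := by rw [hxx]; ring
    calc (∑ n ∈ Finset.range (N + 1), f n) * (1 - z * x ^ N)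
        = ((∑ n ∈ Finset.range N, f (n + 1)) + f 0)
            - z * x ^ N * ((∑ n ∈ Finset.range N, f n) + f N) := by
          rw [← Finset.sum_range_succ' f N, ← Finset.sum_range_succ f N]; ring
      _ = ((∑ n ∈ Finset.range N, F (n + 1)) + F 0) + F (N + 1) := by
          rw [Finset.sum_congr rfl hpas, Finset.sum_add_distrib]
          have hf0 : f 0 = 1 := by
            rw [hf]; simp only; rw [hG0 N]; show eulerC x z 0 * 1 = 1; simp [eulerC]
          have hF0 : F 0 = 1 := by
            rw [hF]; simp only; rw [hG0 (N + 1)]; show eulerC x z 0 * 1 = 1; simp [eulerC]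
          have hfN : f N = eulerC x z N := by
            rw [hf]; simp only; rw [hGtop N, mul_one]
          have hFtop : F (N + 1) = -(z * x ^ N) * eulerC x z N := by
            rw [hF]; simp only; rw [hGtop (N + 1), mul_one]
            show -z * x ^ N * eulerC x z N = _; ring
          rw [hf0, hF0, hfN, hFtop, ← Finset.mul_sum]
          ring
      _ = ∑ n ∈ Finset.range (N + 2), F n := by
          rw [Finset.sum_range_succ F (N + 1), Finset.sum_range_succ' F N]
end KEY

section MAIN
open Filter Finset Topology

/-- Euler's alternating q-series expansion: for `‖x‖ < 1`,
`∏_{m=1}^∞ (1 - x^m) = 1 + ∑_{n=1}^∞ (-1)^n x^{n(n+1)/2} / ∏_{j=1}^n (1 - x^j)`,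
where all products and the series converge. -/
theorem euler_alternating_q_series (x : ℂ) (hx : ‖x‖ < 1) :
    Multipliable (fun m : ℕ => 1 - x ^ (m + 1)) ∧
    Summable (fun n : ℕ => (-1 : ℂ) ^ (n + 1) * x ^ ((n + 1) * (n + 2) / 2) /
      ∏ j ∈ Finset.range (n + 1), (1 - x ^ (j + 1))) ∧
    ∏' m : ℕ, (1 - x ^ (m + 1)) =
      1 + ∑' n : ℕ, (-1 : ℂ) ^ (n + 1) * x ^ ((n + 1) * (n + 2) / 2) /
        ∏ j ∈ Finset.range (n + 1), (1 - x ^ (j + 1)) := by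
  set r := ‖x‖ with hr
  have hr0 : 0 ≤ r := norm_nonneg x
  have hr1 : 1 - r > 0 := by linarith
  have hxk : ∀ k : ℕ, ‖x ^ (k + 1)‖ < 1 := fun k => by
    rw [norm_pow]; exact pow_lt_one₀ hr0 hx k.succ_ne_zero
  have hxle : ∀ k : ℕ, ‖x ^ (k + 1)‖ ≤ r := fun k => by
    rw [norm_pow]; exact pow_le_of_le_one hr0 hx.le k.succ_ne_zero
  have hne : ∀ k : ℕ, (1 : ℂ) - x ^ (k + 1) ≠ 0 := by
    intro k h
    rw [sub_eq_zero] at h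
    have h2 := hxk k
    rw [← h] at h2
    simp at h2
  have hP := eulerP_ne_zero x hne
  -- summability of the logarithms
  set K : ℝ := (1 - r)⁻¹ / 2 + 1 with hK
  have hlogb : ∀ m : ℕ, ‖Complex.log (1 - x ^ (m + 1))‖ ≤ (K * r) * r ^ m := by
    intro m
    have h1 : (1 : ℂ) - x ^ (m + 1) = 1 + (-(x ^ (m + 1))) := by ring
    rw [h1]
    have hz : ‖(-(x ^ (m + 1)))‖ < 1 := by rw [norm_neg]; exact hxk m
    refine (Complex.norm_log_one_add_le hz).trans ?_
    rw [norm_neg, norm_pow, ← hr]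
    set t := r ^ (m + 1) with ht
    have h3 : t ≤ r := by
      rw [ht, ← norm_pow]; exact hxle m
    have h5 : 0 ≤ t := pow_nonneg hr0 _
    have h7 : t ≤ 1 := h3.trans hx.le
    have h4 : (1 - t)⁻¹ ≤ (1 - r)⁻¹ := by
      apply inv_anti₀ hr1; linarith
    have h6 : 0 ≤ (1 - t)⁻¹ := inv_nonneg.mpr (by linarith)
    have h9 : t * (1 - t)⁻¹ ≤ (1 - r)⁻¹ := by
      calc t * (1 - t)⁻¹ ≤ 1 * (1 - t)⁻¹ := mul_le_mul_of_nonneg_right h7 h6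
        _ = (1 - t)⁻¹ := one_mul _
        _ ≤ (1 - r)⁻¹ := h4
    have h10 : t * (t * (1 - t)⁻¹) ≤ t * (1 - r)⁻¹ := mul_le_mul_of_nonneg_left h9 h5
    have h8 : K * r * r ^ m = K * t := by rw [ht, pow_succ]; ring
    rw [h8, hK]
    nlinarith [h10]
  have hlog : Summable (fun m : ℕ => Complex.log (1 - x ^ (m + 1))) := by
    refine Summable.of_norm_bounded ?_ hlogb
    exact (summable_geometric_of_lt_one hr0 hx).mul_left (K * r)
  -- the infinite product
  have hprod : HasProd (fun m : ℕ => 1 - x ^ (m + 1)) (∏' m : ℕ, (1 - x ^ (m + 1))) :=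
    (Complex.multipliable_of_summable_log hlog).hasProd
  set L := ∏' m : ℕ, (1 - x ^ (m + 1)) with hL
  have hmult : Multipliable fun m : ℕ => 1 - x ^ (m + 1) := ⟨L, hprod⟩
  have hLne : L ≠ 0 := by
    have h := Complex.cexp_tsum_eq_tprod (f := fun m => 1 - x ^ (m + 1))
      (fun m => hne m) hlog
    have h2 := h
    rw [hL, ← h2]
    exact Complex.exp_ne_zero _
  have htend : Tendsto (fun N => eulerP x N) atTop (𝓝 L) := by
    have := hprod.tendsto_prod_nat
    simpa only [eulerP] using this
  -- uniform bounds on the partial products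
  have hLpos : 0 < ‖L‖ := norm_pos_iff.mpr hLne
  have hnt : Tendsto (fun N => ‖eulerP x N‖) atTop (𝓝 ‖L‖) := htend.norm
  obtain ⟨N0, hN0⟩ := eventually_atTop.mp
    (hnt.eventually (eventually_ge_nhds (by linarith : ‖L‖ / 2 < ‖L‖)))
  obtain ⟨N1, hN1⟩ := eventually_atTop.mp
    (hnt.eventually (eventually_le_nhds (by linarith : ‖L‖ < ‖L‖ + 1)))
  set c : ℝ := min (‖L‖ / 2)
    ((Finset.range (N0 + 1)).inf' Finset.nonempty_range_add_one fun n => ‖eulerP x n‖) with hc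
  have hc0 : 0 < c := by
    rw [hc]
    apply lt_min (by linarith)
    rw [Finset.lt_inf'_iff]
    exact fun n _ => norm_pos_iff.mpr (hP n)
  have hclb : ∀ n, c ≤ ‖eulerP x n‖ := by
    intro n
    rcases le_or_gt n N0 with h | h
    · exact le_trans (min_le_right _ _)
        (Finset.inf'_le _ (Finset.mem_range.mpr (by omega)))
    · exact le_trans (min_le_left _ _) (hN0 n (by omega))
  set Cb : ℝ := max (‖L‖ + 1)
    ((Finset.range (N1 + 1)).sup' Finset.nonempty_range_add_one fun n => ‖eulerP x n‖) with hCb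
  have hCub : ∀ n, ‖eulerP x n‖ ≤ Cb := by
    intro n
    rcases le_or_gt n N1 with h | h
    · refine le_trans (Finset.le_sup' (fun n => ‖eulerP x n‖) ?_) (le_max_right _ _)
      exact Finset.mem_range.mpr (by omega)
    · exact le_trans (hN1 n (by omega)) (le_max_left _ _)
  have hCb0 : 0 ≤ Cb := le_trans (norm_nonneg _) (hCub 0)
  -- Tannery setup
  set g : ℕ → ℂ := fun k => eulerC x x k * (eulerP x k)⁻¹ with hg
  set F : ℕ → ℕ → ℂ := fun N k =>
    if k ≤ N then eulerC x x k * (eulerP x N / (eulerP x k * eulerP x (N - k))) else 0 with hF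
  have hCnorm : ∀ k : ℕ, ‖eulerC x x k‖ ≤ r ^ k := by
    intro k
    rw [eulerC_x, norm_mul, norm_pow, norm_pow, norm_neg, norm_one, one_pow, one_mul, ← hr]
    apply pow_le_pow_of_le_one hr0 hx.le
    rcases Nat.eq_zero_or_pos k with h | h
    · simp [h]
    · rw [Nat.le_div_iff_mul_le (by norm_num)]
      calc k * 2 ≤ k * (k + 1) := Nat.mul_le_mul_left k (by omega)
        _ = _ := rfl
  set bound : ℕ → ℝ := fun k => (Cb / (c * c)) * r ^ k with hbound
  have hbsum : Summable bound := (summable_geometric_of_lt_one hr0 hx).mul_left _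
  have hFb : ∀ N k, ‖F N k‖ ≤ bound k := by
    intro N k
    rw [hF]
    simp only
    split
    · rw [norm_mul, norm_div, norm_mul]
      have h1 : ‖eulerP x N‖ / (‖eulerP x k‖ * ‖eulerP x (N - k)‖) ≤ Cb / (c * c) :=
        div_le_div₀ hCb0 (hCub N) (by positivity)
          (mul_le_mul (hclb k) (hclb (N - k)) hc0.le (norm_nonneg _))
      calc ‖eulerC x x k‖ * (‖eulerP x N‖ / (‖eulerP x k‖ * ‖eulerP x (N - k)‖))
          ≤ r ^ k * (Cb / (c * c)) :=
            mul_le_mul (hCnorm k) h1 (by positivity) (by positivity)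
        _ = bound k := by rw [hbound]; ring
    · rw [hbound, norm_zero]
      positivity
  have htendF : ∀ k, Tendsto (fun N => F N k) atTop (𝓝 (g k)) := by
    intro k
    have h1 : Tendsto (fun N => eulerC x x k * (eulerP x N / (eulerP x k * eulerP x (N - k))))
        atTop (𝓝 (eulerC x x k * (L / (eulerP x k * L)))) := by
      apply Tendsto.const_mul
      exact Tendsto.div htend (Tendsto.const_mul _ (htend.comp (tendsto_sub_atTop_nat k)))
        (mul_ne_zero (hP k) hLne)
    have h2 : eulerC x x k * (L / (eulerP x k * L)) = g k := by
      have h3 : L / (eulerP x k * L) = (eulerP x k)⁻¹ := by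
        rw [mul_comm, ← div_div, div_self hLne, one_div]
      rw [hg, h3]
    rw [← h2]
    apply h1.congr'
    filter_upwards [eventually_ge_atTop k] with N hNk
    rw [hF]
    simp only [if_pos hNk]
  have hTan := tendsto_tsum_of_dominated_convergence hbsum htendF
    (Eventually.of_forall fun N k => hFb N k)
  have hFsum_eq : ∀ N, ∑' k, F N k = eulerP x N := by
    intro N
    rw [tsum_eq_sum (s := Finset.range (N + 1)) (f := F N) (fun k hk => by
      rw [hF]; simp only; rw [if_neg]
      have := Finset.mem_range.not.mp hk
      omega)]
    have h1 : ∀ k ∈ Finset.range (N + 1),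
        F N k = eulerC x x k * (eulerP x N / (eulerP x k * eulerP x (N - k))) := by
      intro k hk
      rw [hF]
      simp only
      rw [if_pos (by have := Finset.mem_range.mp hk; omega)]
    rw [Finset.sum_congr rfl h1, ← euler_key x x hne N]
    rw [eulerP]
    apply Finset.prod_congr rfl
    intro j _
    rw [pow_succ]
    ring
  have htend2 : Tendsto (fun N => eulerP x N) atTop (𝓝 (∑' k, g k)) :=
    (funext hFsum_eq : (fun N => ∑' k, F N k) = fun N => eulerP x N) ▸ hTan
  have hLg : L = ∑' k, g k := tendsto_nhds_unique htend htend2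
  have hgsum : Summable g := hbsum.of_norm_bounded fun k =>
    le_of_tendsto (htendF k).norm (Eventually.of_forall fun N => hFb N k)
  have hterm : ∀ n : ℕ, (-1 : ℂ) ^ (n + 1) * x ^ ((n + 1) * (n + 2) / 2) /
      ∏ j ∈ Finset.range (n + 1), (1 - x ^ (j + 1)) = g (n + 1) := by
    intro n
    rw [hg]
    simp only
    rw [eulerC_x, div_eq_mul_inv, eulerP]
  refine ⟨hmult, ?_, ?_⟩
  · exact Summable.congr ((summable_nat_add_iff 1).mpr hgsum) fun n => (hterm n).symm
  · rw [hLg, Summable.tsum_eq_zero_add hgsum]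
    have hg0 : g 0 = 1 := by
      rw [hg]
      simp only
      rw [eulerP_zero]
      norm_num
      rfl
    rw [hg0]
    congr 1
    exact tsum_congr fun n => (hterm n).symm
end MAIN
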